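/- Let x₀ > 0 and let f and g be square-integrable functions on (0, x₀), neither of which is zero almost everywhere. Suppose that for every square-integrable function v on (0, x₀), the implication ∫_0^{x₀} f(x) v(x) dx ≤ 0 ⟹ ∫_0^{x₀} g(x) v(x) dx ≤ 0 holds. Then there exists a constant λ such that f(x) = λ g(x) for almost every x ∈ (0, x₀). -/

import Mathlib

open MeasureTheory

lemma integrable_mul_of_memL2 {μ : Measure ℝ} {f g : ℝ → ℝ}
    (hf : MemLp f 2 μ) (hg : MemLp g 2 μ) :
    Integrable (fun x => f x * g x) μ := by
  have : (fun x => f x * g x)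
      = fun x => ((f x + g x) ^ 2 - f x ^ 2 - g x ^ 2) / 2 := by
    funext x; ring
  rw [this]
  exact (((hf.add hg).integrable_sq.sub hf.integrable_sq).sub hg.integrable_sq).div_const 2

/-- **Variational lemma:** if `f, g ∈ L²(0, x₀)` are nonzero and every square-integrable `v`
with `∫ f v ≤ 0` also satisfies `∫ g v ≤ 0`, then `f = λ g` almost everywhere for some
constant `λ`. -/
theorem proportional_of_integral_implication (x₀ : ℝ) (hx₀ : 0 < x₀) (f g : ℝ → ℝ)
    (hf : MemLp f 2 (volume.restrict (Set.Ioo 0 x₀)))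
    (hg : MemLp g 2 (volume.restrict (Set.Ioo 0 x₀)))
    (hf0 : ¬ f =ᵐ[volume.restrict (Set.Ioo 0 x₀)] 0)
    (hg0 : ¬ g =ᵐ[volume.restrict (Set.Ioo 0 x₀)] 0)
    (h : ∀ v : ℝ → ℝ, MemLp v 2 (volume.restrict (Set.Ioo 0 x₀)) →
      (∫ x in Set.Ioo 0 x₀, f x * v x) ≤ 0 → (∫ x in Set.Ioo 0 x₀, g x * v x) ≤ 0) :
    ∃ lam : ℝ, f =ᵐ[volume.restrict (Set.Ioo 0 x₀)] fun x => lam * g x := by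
  set μ := volume.restrict (Set.Ioo 0 x₀) with hμ
  -- key: ∫ f v = 0 → ∫ g v = 0
  have key : ∀ v : ℝ → ℝ, MemLp v 2 μ →
      (∫ x in Set.Ioo 0 x₀, f x * v x) = 0 → (∫ x in Set.Ioo 0 x₀, g x * v x) = 0 := by
    intro v hv hfv
    have h1 := h v hv (le_of_eq hfv)
    have h2 := h (fun x => -v x) hv.neg (by
      have : (∫ x in Set.Ioo 0 x₀, f x * (-v x)) = -∫ x in Set.Ioo 0 x₀, f x * v x := by
        simp [mul_neg, integral_neg]
      rw [this, hfv]; simp)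
    have h2' : (∫ x in Set.Ioo 0 x₀, g x * (-v x)) = -∫ x in Set.Ioo 0 x₀, g x * v x := by
      simp [mul_neg, integral_neg]
    rw [h2'] at h2
    linarith
  have hff : Integrable (fun x => f x * f x) μ := integrable_mul_of_memL2 hf hf
  have hfg : Integrable (fun x => f x * g x) μ := integrable_mul_of_memL2 hf hg
  -- F := ∫ f², positive
  set F : ℝ := ∫ x in Set.Ioo 0 x₀, f x * f x with hF
  have hFpos : 0 < F := by
    rcases lt_or_eq_of_le (integral_nonneg (fun x => mul_self_nonneg (f x)) :
        (0:ℝ) ≤ ∫ x in Set.Ioo 0 x₀, f x * f x) with hlt | heq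
    · exact hlt
    · exfalso
      apply hf0
      have := (integral_eq_zero_iff_of_nonneg
        (fun x => mul_self_nonneg (f x)) hff).mp heq.symm
      filter_upwards [this] with x hx
      simpa [mul_self_eq_zero] using hx
  set A : ℝ := ∫ x in Set.Ioo 0 x₀, f x * g x with hA
  set c : ℝ := A / F with hc
  set w : ℝ → ℝ := fun x => g x - c * f x with hw
  have hwmem : MemLp w 2 μ := hg.sub (hf.const_mul c)
  have hfw : (∫ x in Set.Ioo 0 x₀, f x * w x) = 0 := by
    have : (∫ x in Set.Ioo 0 x₀, f x * w x)
        = (∫ x in Set.Ioo 0 x₀, f x * g x) - c * ∫ x in Set.Ioo 0 x₀, f x * f x := by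
      simp only [hw, mul_sub]
      rw [integral_sub hfg ((hff.const_mul c).congr ?_), ← integral_const_mul]
      · congr 1; apply integral_congr_ae; filter_upwards with x; ring
      · filter_upwards with x; ring
    rw [this, ← hA, ← hF, hc]
    field_simp
    ring
  have hgw : (∫ x in Set.Ioo 0 x₀, g x * w x) = 0 := key w hwmem hfw
  have hww : (∫ x in Set.Ioo 0 x₀, w x * w x) = 0 := by
    have hgwI : Integrable (fun x => g x * w x) μ := integrable_mul_of_memL2 hg hwmem
    have hfwI : Integrable (fun x => f x * w x) μ := integrable_mul_of_memL2 hf hwmem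
    have : (∫ x in Set.Ioo 0 x₀, w x * w x)
        = (∫ x in Set.Ioo 0 x₀, g x * w x) - c * ∫ x in Set.Ioo 0 x₀, f x * w x := by
      rw [← integral_const_mul, ← integral_sub hgwI ((hfwI.const_mul c))]
      apply integral_congr_ae; filter_upwards with x; simp only [hw]; ring
    rw [this, hgw, hfw]; ring
  have hwwI : Integrable (fun x => w x * w x) μ := integrable_mul_of_memL2 hwmem hwmem
  have hw0 : w =ᵐ[μ] 0 := by
    have := (integral_eq_zero_iff_of_nonneg (fun x => mul_self_nonneg (w x)) hwwI).mp hww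
    filter_upwards [this] with x hx
    simpa [mul_self_eq_zero] using hx
  have hgc : g =ᵐ[μ] fun x => c * f x := by
    filter_upwards [hw0] with x hx
    have : g x - c * f x = 0 := hx
    linarith
  have hc0 : c ≠ 0 := by
    intro hc0
    apply hg0
    filter_upwards [hgc] with x hx
    simp [hx, hc0]
  refine ⟨c⁻¹, ?_⟩
  filter_upwards [hgc] with x hx
  rw [hx]
  field_simp
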